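/- Define h(q) := ((4q² − 3)K(q) + 2E(q))/√(2q² − 1) on (1/√2, 1). Then h'(q) = −f(q)/((2q²−1)^{3/2} q(1−q²)) for q ∈ (1/√2,1), where f(q) = (4q⁴−5q²+1)K(q) + (−8q⁴+8q²−1)E(q). In particular h is decreasing on (1/√2, q̂] and increasing on [q̂, 1), where q̂ is the unique zero of f. -/

import Mathlib

open Real Set Filter MeasureTheory intervalIntegral

noncomputable def Kc (q : ℝ) : ℝ := ∫ θ in (0:ℝ)..(π/2), 1 / Real.sqrt (1 - q^2 * Real.sin θ^2)

noncomputable def Ec (q : ℝ) : ℝ := ∫ θ in (0:ℝ)..(π/2), Real.sqrt (1 - q^2 * Real.sin θ^2)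

lemma delta_ge (q θ : ℝ) : 1 - q^2 ≤ 1 - q^2 * Real.sin θ^2 := by
  nlinarith [Real.sin_sq_le_one θ, sq_nonneg q]

lemma delta_pos {q : ℝ} (hq : q^2 < 1) (θ : ℝ) : 0 < 1 - q^2 * Real.sin θ^2 :=
  lt_of_lt_of_le (by linarith) (delta_ge q θ)

lemma sqrt_delta_pos {q : ℝ} (hq : q^2 < 1) (θ : ℝ) :
    0 < Real.sqrt (1 - q^2 * Real.sin θ^2) := Real.sqrt_pos.mpr (delta_pos hq θ)

lemma cont_delta (q : ℝ) : Continuous fun θ : ℝ => 1 - q^2 * Real.sin θ^2 := by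
  continuity

lemma cont_sqrt_delta (q : ℝ) : Continuous fun θ : ℝ => Real.sqrt (1 - q^2 * Real.sin θ^2) :=
  (cont_delta q).sqrt

lemma cont_inv_sqrt_delta {q : ℝ} (hq : q^2 < 1) :
    Continuous fun θ : ℝ => 1 / Real.sqrt (1 - q^2 * Real.sin θ^2) :=
  continuous_const.div (cont_sqrt_delta q) fun θ => (sqrt_delta_pos hq θ).ne'

lemma Kc_pos {q : ℝ} (hq : q^2 < 1) : 0 < Kc q := by
  apply intervalIntegral_pos_of_pos ((cont_inv_sqrt_delta hq).intervalIntegrable _ _)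
  · intro x
    exact div_pos one_pos (sqrt_delta_pos hq x)
  · positivity

lemma Ec_pos {q : ℝ} (hq : q^2 < 1) : 0 < Ec q := by
  apply intervalIntegral_pos_of_pos ((cont_sqrt_delta q).intervalIntegrable _ _)
  · intro x
    exact sqrt_delta_pos hq x
  · positivity

noncomputable def J1 (q : ℝ) : ℝ :=
  ∫ θ in (0:ℝ)..(π/2), Real.sin θ^2 / Real.sqrt (1 - q^2 * Real.sin θ^2)

noncomputable def J3 (q : ℝ) : ℝ :=
  ∫ θ in (0:ℝ)..(π/2), Real.sin θ^2 / (Real.sqrt (1 - q^2 * Real.sin θ^2))^3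

lemma cont_J1_integrand {q : ℝ} (hq : q^2 < 1) :
    Continuous fun θ : ℝ => Real.sin θ^2 / Real.sqrt (1 - q^2 * Real.sin θ^2) :=
  (Continuous.pow Real.continuous_sin 2).div (cont_sqrt_delta q)
    fun θ => (sqrt_delta_pos hq θ).ne'

lemma cont_J3_integrand {q : ℝ} (hq : q^2 < 1) :
    Continuous fun θ : ℝ => Real.sin θ^2 / (Real.sqrt (1 - q^2 * Real.sin θ^2))^3 :=
  (Continuous.pow Real.continuous_sin 2).div ((cont_sqrt_delta q).pow 3)
    fun θ => pow_ne_zero _ (sqrt_delta_pos hq θ).ne'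

lemma J1_eq {q : ℝ} (hq : q^2 < 1) : q^2 * J1 q = Kc q - Ec q := by
  rw [Kc, Ec, ← intervalIntegral.integral_sub
      (((cont_inv_sqrt_delta hq)).intervalIntegrable _ _)
      ((cont_sqrt_delta q).intervalIntegrable _ _), J1,
    ← intervalIntegral.integral_const_mul]
  apply intervalIntegral.integral_congr
  intro θ _
  have h0 := delta_pos hq θ
  have hs := sqrt_delta_pos hq θ
  have hsq : Real.sqrt (1 - q^2 * Real.sin θ^2) ^ 2 = 1 - q^2 * Real.sin θ^2 :=
    Real.sq_sqrt h0.le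
  field_simp
  linarith [hsq]

lemma J3_eq {q : ℝ} (hq : q^2 < 1) : (1 - q^2) * J3 q = Kc q - J1 q := by
  set g : ℝ → ℝ := fun θ =>
    (1 - Real.sin θ^2) / Real.sqrt (1 - q^2 * Real.sin θ^2)
      + (q^2 - 1) * (Real.sin θ^2 / (Real.sqrt (1 - q^2 * Real.sin θ^2))^3) with hg
  have hgc : Continuous g :=
    (((continuous_const.sub (Real.continuous_sin.pow 2)).div (cont_sqrt_delta q)
      fun θ => (sqrt_delta_pos hq θ).ne')).add (continuous_const.mul (cont_J3_integrand hq))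
  have hderiv : ∀ θ ∈ uIcc (0:ℝ) (π/2), HasDerivAt
      (fun t => Real.sin t * Real.cos t / Real.sqrt (1 - q^2 * Real.sin t^2)) (g θ) θ := by
    intro θ _
    have h0 := delta_pos hq θ
    have hs := sqrt_delta_pos hq θ
    have hu : HasDerivAt (fun t => 1 - q^2 * Real.sin t^2)
        (-(q^2 * (2 * Real.sin θ ^ 1 * Real.cos θ))) θ :=
      (((Real.hasDerivAt_sin θ).pow 2).const_mul (q^2)).const_sub 1
    have hsqrt := hu.sqrt h0.ne'
    have hnum : HasDerivAt (fun t => Real.sin t * Real.cos t)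
        (Real.cos θ * Real.cos θ + Real.sin θ * -Real.sin θ) θ :=
      (Real.hasDerivAt_sin θ).mul (Real.hasDerivAt_cos θ)
    have hdd := hnum.div hsqrt hs.ne'
    refine hdd.congr_deriv ?_
    simp only [hg]
    have hsq : Real.sqrt (1 - q^2 * Real.sin θ^2) ^ 2 = 1 - q^2 * Real.sin θ^2 :=
      Real.sq_sqrt h0.le
    have hpyth := Real.sin_sq_add_cos_sq θ
    set r := Real.sqrt (1 - q ^ 2 * Real.sin θ ^ 2) with hr
    have e1 : (1 - Real.sin θ^2) / r + (q^2 - 1) * (Real.sin θ^2 / r^3)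
        = ((1 - Real.sin θ^2) * r^2 + (q^2-1) * Real.sin θ^2) / r^3 := by
      field_simp
    have e2 : ((Real.cos θ * Real.cos θ + Real.sin θ * -Real.sin θ) * r -
          Real.sin θ * Real.cos θ * (-(q ^ 2 * (2 * Real.sin θ ^ 1 * Real.cos θ)) / (2 * r))) / r ^ 2
        = ((Real.cos θ * Real.cos θ + Real.sin θ * -Real.sin θ) * r^2
            + q^2 * Real.sin θ^2 * Real.cos θ^2) / r^3 := by
      field_simp; ring
    rw [e1, e2]
    have key : (1 - Real.sin θ^2) * r^2 + (q^2-1) * Real.sin θ^2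
        = (Real.cos θ * Real.cos θ + Real.sin θ * -Real.sin θ) * r^2
            + q^2 * Real.sin θ^2 * Real.cos θ^2 := by
      linear_combination (1 - Real.cos θ^2) * hsq - hpyth
    rw [key]
  have hint : ∫ θ in (0:ℝ)..(π/2), g θ =
      Real.sin (π/2) * Real.cos (π/2) / Real.sqrt (1 - q^2 * Real.sin (π/2)^2)
        - Real.sin 0 * Real.cos 0 / Real.sqrt (1 - q^2 * Real.sin 0^2) :=
    intervalIntegral.integral_eq_sub_of_hasDerivAt hderiv (hgc.intervalIntegrable _ _)
  rw [Real.cos_pi_div_two, Real.sin_zero] at hint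
  simp only [mul_zero, zero_mul, zero_div] at hint
  have hsplit : ∫ θ in (0:ℝ)..(π/2), g θ = (Kc q - J1 q) + (q^2 - 1) * J3 q := by
    have h1 : (∫ θ in (0:ℝ)..(π/2), g θ)
        = (∫ θ in (0:ℝ)..(π/2), (1 - Real.sin θ^2) / Real.sqrt (1 - q^2 * Real.sin θ^2))
          + ∫ θ in (0:ℝ)..(π/2),
              (q^2 - 1) * (Real.sin θ^2 / (Real.sqrt (1 - q^2 * Real.sin θ^2))^3) := by
      exact intervalIntegral.integral_add
        (((continuous_const.sub (Real.continuous_sin.pow 2)).div (cont_sqrt_delta q)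
          fun θ => (sqrt_delta_pos hq θ).ne').intervalIntegrable _ _)
        ((continuous_const.mul (cont_J3_integrand hq)).intervalIntegrable _ _)
    rw [h1, intervalIntegral.integral_const_mul]
    congr 1
    · rw [Kc, J1, ← intervalIntegral.integral_sub
        ((cont_inv_sqrt_delta hq).intervalIntegrable _ _)
        ((cont_J1_integrand hq).intervalIntegrable _ _)]
      apply intervalIntegral.integral_congr
      intro θ _
      simp [sub_div]
  rw [hsplit] at hint
  linarith [hint]

lemma ball_sq_lt {q x : ℝ} (hq : |q| < 1)
    (hx : x ∈ Metric.ball q ((1 - |q|)/2)) : |x| < (1 + |q|)/2 := by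
  have := Metric.mem_ball.mp hx
  rw [Real.dist_eq] at this
  calc |x| = |x - q + q| := by ring_nf
    _ ≤ |x - q| + |q| := abs_add_le _ _
    _ < (1 - |q|)/2 + |q| := by linarith
    _ = (1 + |q|)/2 := by ring

lemma hasDerivAt_Kc_aux {q : ℝ} (hq : |q| < 1) :
    HasDerivAt Kc (q * J3 q) q := by
  set a : ℝ := (1 + |q|)/2 with ha
  have haq : |q| < a := by rw [ha]; linarith
  have ha1 : a < 1 := by rw [ha]; linarith
  have ha0 : 0 < a := lt_of_le_of_lt (abs_nonneg q) haq
  have hq2 : q^2 < 1 := by nlinarith [abs_nonneg q, sq_abs q]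
  have ha2 : a^2 < 1 := by nlinarith
  have hδ : ∀ x : ℝ, |x| ≤ a → ∀ θ : ℝ, 1 - a^2 ≤ 1 - x^2 * Real.sin θ^2 := by
    intro x hx θ
    have h1 : x^2 ≤ a^2 := by nlinarith [abs_nonneg x, sq_abs x, sq_abs a]
    nlinarith [Real.sin_sq_le_one θ, sq_nonneg x]
  have hεpos : (0:ℝ) < (1 - |q|)/2 := by linarith
  have key := intervalIntegral.hasDerivAt_integral_of_dominated_loc_of_deriv_le
    (F := fun x θ => 1 / Real.sqrt (1 - x^2 * Real.sin θ^2))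
    (F' := fun x θ => x * (Real.sin θ^2 / (Real.sqrt (1 - x^2 * Real.sin θ^2))^3))
    (x₀ := q) (a := 0) (b := π/2) (μ := volume)
    (bound := fun _ => a / (Real.sqrt (1 - a^2))^3) (Metric.ball_mem_nhds q hεpos)
    (Filter.Eventually.of_forall fun x =>
      (measurable_const.div (cont_sqrt_delta x).measurable).aestronglyMeasurable)
    ((cont_inv_sqrt_delta hq2).intervalIntegrable _ _)
    ((continuous_const.mul (cont_J3_integrand hq2)).aestronglyMeasurable)
    (Filter.Eventually.of_forall fun θ _ => fun x hx => by
      have hxa : |x| ≤ a := (ball_sq_lt hq hx).le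
      have hd : 1 - a^2 ≤ 1 - x^2 * Real.sin θ^2 := hδ x hxa θ
      have hpos : 0 < 1 - x^2 * Real.sin θ^2 := lt_of_lt_of_le (by linarith) hd
      have hsa : Real.sqrt (1 - a^2) ≤ Real.sqrt (1 - x^2 * Real.sin θ^2) :=
        Real.sqrt_le_sqrt hd
      have hsa0 : 0 < Real.sqrt (1 - a^2) := Real.sqrt_pos.mpr (by linarith)
      rw [Real.norm_eq_abs, abs_mul, abs_div]
      have h1 : |Real.sin θ^2| ≤ 1 := by
        rw [abs_of_nonneg (sq_nonneg _)]; exact Real.sin_sq_le_one θ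
      have h2 : (Real.sqrt (1 - a^2))^3 ≤ |(Real.sqrt (1 - x^2 * Real.sin θ^2))^3| := by
        rw [abs_of_nonneg (by positivity)]
        exact pow_le_pow_left₀ hsa0.le hsa 3
      have h3 : |Real.sin θ^2| / |(Real.sqrt (1 - x^2 * Real.sin θ^2))^3|
          ≤ 1 / (Real.sqrt (1 - a^2))^3 := by
        apply div_le_div₀ (by norm_num) h1 (by positivity) h2
      calc |x| * (|Real.sin θ^2| / |(Real.sqrt (1 - x^2 * Real.sin θ^2))^3|)
          ≤ a * (1 / (Real.sqrt (1 - a^2))^3) :=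
            mul_le_mul hxa h3 (by positivity) ha0.le
        _ = a / (Real.sqrt (1 - a^2))^3 := by ring)
    (intervalIntegrable_const)
    (Filter.Eventually.of_forall fun θ _ => fun x hx => by
      have hxa : |x| ≤ a := (ball_sq_lt hq hx).le
      have hd : 1 - a^2 ≤ 1 - x^2 * Real.sin θ^2 := hδ x hxa θ
      have hpos : 0 < 1 - x^2 * Real.sin θ^2 := lt_of_lt_of_le (by linarith) hd
      have hs0 : 0 < Real.sqrt (1 - x^2 * Real.sin θ^2) := Real.sqrt_pos.mpr hpos
      have hu : HasDerivAt (fun y : ℝ => 1 - y^2 * Real.sin θ^2)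
          (-((2 * x^1) * Real.sin θ^2)) x :=
        (((hasDerivAt_pow 2 x)).mul_const (Real.sin θ^2)).const_sub 1
      have hsqrt := hu.sqrt hpos.ne'
      have hdd := (hasDerivAt_const x (1:ℝ)).div hsqrt hs0.ne'
      refine hdd.congr_deriv ?_
      have hsq : Real.sqrt (1 - x^2 * Real.sin θ^2) ^ 2 = 1 - x^2 * Real.sin θ^2 :=
        Real.sq_sqrt hpos.le
      set r := Real.sqrt (1 - x^2 * Real.sin θ^2)
      field_simp
      ring)
  have : (∫ θ in (0:ℝ)..(π/2), q * (Real.sin θ^2 / (Real.sqrt (1 - q^2 * Real.sin θ^2))^3))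
      = q * J3 q := intervalIntegral.integral_const_mul _ _
  rw [← this]
  exact key.2

lemma hasDerivAt_Ec_aux {q : ℝ} (hq : |q| < 1) :
    HasDerivAt Ec (-(q * J1 q)) q := by
  set a : ℝ := (1 + |q|)/2 with ha
  have haq : |q| < a := by rw [ha]; linarith
  have ha1 : a < 1 := by rw [ha]; linarith
  have ha0 : 0 < a := lt_of_le_of_lt (abs_nonneg q) haq
  have hq2 : q^2 < 1 := by nlinarith [abs_nonneg q, sq_abs q]
  have ha2 : a^2 < 1 := by nlinarith
  have hδ : ∀ x : ℝ, |x| ≤ a → ∀ θ : ℝ, 1 - a^2 ≤ 1 - x^2 * Real.sin θ^2 := by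
    intro x hx θ
    have h1 : x^2 ≤ a^2 := by nlinarith [abs_nonneg x, sq_abs x, sq_abs a]
    nlinarith [Real.sin_sq_le_one θ, sq_nonneg x]
  have hεpos : (0:ℝ) < (1 - |q|)/2 := by linarith
  have key := intervalIntegral.hasDerivAt_integral_of_dominated_loc_of_deriv_le
    (F := fun x θ => Real.sqrt (1 - x^2 * Real.sin θ^2))
    (F' := fun x θ => -(x * (Real.sin θ^2 / Real.sqrt (1 - x^2 * Real.sin θ^2))))
    (x₀ := q) (a := 0) (b := π/2) (μ := volume)
    (bound := fun _ => a / Real.sqrt (1 - a^2)) (Metric.ball_mem_nhds q hεpos)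
    (Filter.Eventually.of_forall fun x =>
      (cont_sqrt_delta x).measurable.aestronglyMeasurable)
    ((cont_sqrt_delta q).intervalIntegrable _ _)
    ((continuous_const.mul (cont_J1_integrand hq2)).neg.aestronglyMeasurable)
    (Filter.Eventually.of_forall fun θ _ => fun x hx => by
      have hxa : |x| ≤ a := (ball_sq_lt hq hx).le
      have hd : 1 - a^2 ≤ 1 - x^2 * Real.sin θ^2 := hδ x hxa θ
      have hpos : 0 < 1 - x^2 * Real.sin θ^2 := lt_of_lt_of_le (by linarith) hd
      have hsa : Real.sqrt (1 - a^2) ≤ Real.sqrt (1 - x^2 * Real.sin θ^2) :=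
        Real.sqrt_le_sqrt hd
      have hsa0 : 0 < Real.sqrt (1 - a^2) := Real.sqrt_pos.mpr (by linarith)
      rw [Real.norm_eq_abs, abs_neg, abs_mul, abs_div]
      have h1 : |Real.sin θ^2| ≤ 1 := by
        rw [abs_of_nonneg (sq_nonneg _)]; exact Real.sin_sq_le_one θ
      have h2 : Real.sqrt (1 - a^2) ≤ |Real.sqrt (1 - x^2 * Real.sin θ^2)| := by
        rw [abs_of_nonneg (Real.sqrt_nonneg _)]; exact hsa
      have h3 : |Real.sin θ^2| / |Real.sqrt (1 - x^2 * Real.sin θ^2)|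
          ≤ 1 / Real.sqrt (1 - a^2) :=
        div_le_div₀ (by norm_num) h1 (by positivity) h2
      calc |x| * (|Real.sin θ^2| / |Real.sqrt (1 - x^2 * Real.sin θ^2)|)
          ≤ a * (1 / Real.sqrt (1 - a^2)) := mul_le_mul hxa h3 (by positivity) ha0.le
        _ = a / Real.sqrt (1 - a^2) := by ring)
    (intervalIntegrable_const)
    (Filter.Eventually.of_forall fun θ _ => fun x hx => by
      have hxa : |x| ≤ a := (ball_sq_lt hq hx).le
      have hd : 1 - a^2 ≤ 1 - x^2 * Real.sin θ^2 := hδ x hxa θ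
      have hpos : 0 < 1 - x^2 * Real.sin θ^2 := lt_of_lt_of_le (by linarith) hd
      have hs0 : 0 < Real.sqrt (1 - x^2 * Real.sin θ^2) := Real.sqrt_pos.mpr hpos
      have hu : HasDerivAt (fun y : ℝ => 1 - y^2 * Real.sin θ^2)
          (-((2 * x^1) * Real.sin θ^2)) x :=
        (((hasDerivAt_pow 2 x)).mul_const (Real.sin θ^2)).const_sub 1
      have hdd := hu.sqrt hpos.ne'
      refine hdd.congr_deriv ?_
      set r := Real.sqrt (1 - x^2 * Real.sin θ^2)
      field_simp)
  have : (∫ θ in (0:ℝ)..(π/2), -(q * (Real.sin θ^2 / Real.sqrt (1 - q^2 * Real.sin θ^2))))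
      = -(q * J1 q) := by
    rw [intervalIntegral.integral_neg, intervalIntegral.integral_const_mul, J1]
  rw [← this]
  exact key.2

lemma hasDerivAt_Kc {q : ℝ} (h0 : 0 < q) (h1 : q < 1) :
    HasDerivAt Kc ((Ec q - (1 - q^2) * Kc q) / (q * (1 - q^2))) q := by
  have hq2 : q^2 < 1 := by nlinarith
  have habs : |q| < 1 := by rw [abs_of_pos h0]; exact h1
  have h := hasDerivAt_Kc_aux habs
  have hJ1 := J1_eq hq2
  have hJ3 := J3_eq hq2
  have : q * J3 q = (Ec q - (1 - q^2) * Kc q) / (q * (1 - q^2)) := by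
    rw [eq_div_iff (mul_pos h0 (by nlinarith : (0:ℝ) < 1 - q^2)).ne']
    nlinarith [hJ1, hJ3]
  rwa [this] at h

lemma hasDerivAt_Ec {q : ℝ} (h0 : 0 < q) (h1 : q < 1) :
    HasDerivAt Ec ((Ec q - Kc q) / q) q := by
  have hq2 : q^2 < 1 := by nlinarith
  have habs : |q| < 1 := by rw [abs_of_pos h0]; exact h1
  have h := hasDerivAt_Ec_aux habs
  have hJ1 := J1_eq hq2
  have : -(q * J1 q) = (Ec q - Kc q) / q := by
    rw [eq_div_iff h0.ne']
    nlinarith [hJ1]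
  rwa [this] at h

noncomputable def fc (q : ℝ) : ℝ := (4*q^4 - 5*q^2 + 1) * Kc q + (-8*q^4 + 8*q^2 - 1) * Ec q

noncomputable def hc (q : ℝ) : ℝ := ((4*q^2 - 3) * Kc q + 2 * Ec q) / Real.sqrt (2*q^2 - 1)

lemma hasDerivAt_fc {q : ℝ} (h0 : 0 < q) (h1 : q < 1) :
    HasDerivAt fc (q * ((20*q^2 - 13) * Kc q + 20*(1 - 2*q^2) * Ec q)) q := by
  have h1q : (0:ℝ) < 1 - q^2 := by nlinarith
  have hK := hasDerivAt_Kc h0 h1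
  have hE := hasDerivAt_Ec h0 h1
  have hp1 : HasDerivAt (fun x : ℝ => 4*x^4 - 5*x^2 + 1) (16*q^3 - 10*q) q := by
    have := (((hasDerivAt_pow 4 q).const_mul 4).sub ((hasDerivAt_pow 2 q).const_mul 5)).add_const 1
    refine this.congr_deriv ?_
    push_cast; ring
  have hp2 : HasDerivAt (fun x : ℝ => -8*x^4 + 8*x^2 - 1) (-32*q^3 + 16*q) q := by
    have := (((hasDerivAt_pow 4 q).const_mul (-8)).add ((hasDerivAt_pow 2 q).const_mul 8)).sub_const 1
    refine this.congr_deriv ?_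
    push_cast; ring
  have hdd := (hp1.mul hK).add (hp2.mul hE)
  refine hdd.congr_deriv ?_
  field_simp
  ring

lemma hasDerivAt_hc {q : ℝ} (hhalf : 1/2 < q^2) (h0 : 0 < q) (h1 : q < 1) :
    HasDerivAt hc (-fc q / ((2*q^2 - 1) ^ ((3:ℝ)/2) * q * (1 - q^2))) q := by
  have h1q : (0:ℝ) < 1 - q^2 := by nlinarith
  have hv : (0:ℝ) < 2*q^2 - 1 := by linarith
  have hK := hasDerivAt_Kc h0 h1
  have hE := hasDerivAt_Ec h0 h1
  set r := Real.sqrt (2*q^2 - 1) with hr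
  have hr0 : 0 < r := Real.sqrt_pos.mpr hv
  have hsq : r^2 = 2*q^2 - 1 := Real.sq_sqrt hv.le
  have hrpow : (2*q^2 - 1) ^ ((3:ℝ)/2) = r^3 := by
    rw [hr, Real.sqrt_eq_rpow, ← Real.rpow_natCast ((2*q^2-1) ^ ((1:ℝ)/2)) 3,
      ← Real.rpow_mul hv.le]
    norm_num
  have hp1 : HasDerivAt (fun x : ℝ => 4*x^2 - 3) (8*q) q := by
    have := ((hasDerivAt_pow 2 q).const_mul 4).sub_const 3
    refine this.congr_deriv ?_
    push_cast; ring
  have hN : HasDerivAt (fun x => (4*x^2 - 3) * Kc x + 2 * Ec x)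
      ((8*q) * Kc q + (4*q^2 - 3) * ((Ec q - (1 - q^2) * Kc q) / (q * (1 - q^2)))
        + 2 * ((Ec q - Kc q) / q)) q :=
    (hp1.mul hK).add (hE.const_mul 2)
  have hu : HasDerivAt (fun x : ℝ => 2*x^2 - 1) (2*(2*q^1)) q :=
    ((hasDerivAt_pow 2 q).const_mul 2).sub_const 1
  have hd : HasDerivAt (fun x => Real.sqrt (2*x^2 - 1)) (2*(2*q^1) / (2*r)) q := hu.sqrt hv.ne'
  have hdd := hN.div hd hr0.ne'
  refine hdd.congr_deriv ?_
  rw [hrpow]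
  set N' : ℝ := (8*q) * Kc q + (4*q^2 - 3) * ((Ec q - (1 - q^2) * Kc q) / (q * (1 - q^2)))
      + 2 * ((Ec q - Kc q) / q) with hN'
  set N : ℝ := (4*q^2 - 3) * Kc q + 2 * Ec q with hNdef
  have step1 : (N' * r - N * (2*(2*q^1) / (2*r))) / r^2
      = (N' * (2*q^2 - 1) - 2*q*N) / r^3 := by
    rw [← hsq]
    field_simp
  have step2 : q * (1 - q^2) * (N' * (2*q^2 - 1) - 2*q*N) = -fc q := by
    rw [hN', hNdef]
    simp only [fc]
    field_simp
    ring
  rw [step1, ← step2]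
  rw [div_eq_div_iff (by positivity) (by positivity)]
  ring

lemma gt_inv_sqrt2 {q : ℝ} (h : 1 / Real.sqrt 2 < q) : 1/2 < q^2 ∧ 0 < q := by
  have h2 : (0:ℝ) < Real.sqrt 2 := Real.sqrt_pos.mpr (by norm_num)
  have hpos : 0 < q := lt_trans (by positivity) h
  refine ⟨?_, hpos⟩
  have hsq : (1 / Real.sqrt 2)^2 < q^2 := by
    apply pow_lt_pow_left₀ h (by positivity) (by norm_num)
  rwa [div_pow, one_pow, Real.sq_sqrt (by norm_num : (0:ℝ) ≤ 2)] at hsq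

lemma hasDerivAt_g {q : ℝ} (h0 : 0 < q) (h1 : q < 1) :
    HasDerivAt (fun x => 2 * Ec x - Kc x)
      (((1 - 2*q^2) * Ec q - (1 - q^2) * Kc q) / (q * (1 - q^2))) q := by
  have h1q : (0:ℝ) < 1 - q^2 := by nlinarith
  have hdd := ((hasDerivAt_Ec h0 h1).const_mul 2).sub (hasDerivAt_Kc h0 h1)
  refine hdd.congr_deriv ?_
  field_simp
  ring

lemma g_strictAnti : StrictAntiOn (fun x => 2 * Ec x - Kc x) (Ico (1 / Real.sqrt 2) 1) := by
  apply strictAntiOn_of_deriv_neg (convex_Ico _ _)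
  · intro x hx
    have h2 : (0:ℝ) < Real.sqrt 2 := Real.sqrt_pos.mpr (by norm_num)
    have hx0 : 0 < x := lt_of_lt_of_le (by positivity) hx.1
    exact ((hasDerivAt_g hx0 hx.2).continuousAt).continuousWithinAt
  · rw [interior_Ico]
    intro x hx
    obtain ⟨hhalf, hx0⟩ := gt_inv_sqrt2 hx.1
    have hx1 : x < 1 := hx.2
    have hx2 : x^2 < 1 := by nlinarith
    have h1q : (0:ℝ) < 1 - x^2 := by nlinarith
    rw [(hasDerivAt_g hx0 hx1).deriv]
    apply div_neg_of_neg_of_pos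
    · nlinarith [Kc_pos hx2, Ec_pos hx2]
    · positivity

theorem stmt_14 (qstar : ℝ) (hqs : qstar ∈ Ioo (0:ℝ) 1) (hqs0 : 2 * Ec qstar = Kc qstar)
    (qhat : ℝ) (hqh : qhat ∈ Ioo (1 / Real.sqrt 2) qstar) (hqh0 : fc qhat = 0) :
    (∀ q ∈ Ioo (1 / Real.sqrt 2) (1:ℝ),
      HasDerivAt hc (-fc q / ((2*q^2 - 1) ^ ((3:ℝ)/2) * q * (1 - q^2))) q) ∧
    StrictAntiOn hc (Ioc (1 / Real.sqrt 2) qhat) ∧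
    StrictMonoOn hc (Ico qhat 1) := by
  have hs2 : (0:ℝ) < 1 / Real.sqrt 2 := by positivity
  have hqhat1 : qhat < 1 := lt_trans hqh.2 hqs.2
  have hqhat0 : 1 / Real.sqrt 2 < qhat := hqh.1
  have hqstar0 : 1 / Real.sqrt 2 < qstar := lt_trans hqhat0 hqh.2
  -- g = 2E - K sign facts
  have hgpos : ∀ x, 1 / Real.sqrt 2 < x → x < qstar → 0 < 2 * Ec x - Kc x := by
    intro x hx1 hx2
    have := g_strictAnti ⟨hx1.le, lt_trans hx2 hqs.2⟩ ⟨hqstar0.le, hqs.2⟩ hx2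
    simpa [hqs0] using this
  have hgneg : ∀ x, qstar < x → x < 1 → 2 * Ec x - Kc x < 0 := by
    intro x hx1 hx2
    have := g_strictAnti ⟨hqstar0.le, hqs.2⟩ ⟨le_trans hqstar0.le hx1.le, hx2⟩ hx1
    simpa [hqs0] using this
  -- f strictly decreasing on Icc (1/√2) qstar
  have hfanti : StrictAntiOn fc (Icc (1 / Real.sqrt 2) qstar) := by
    apply strictAntiOn_of_deriv_neg (convex_Icc _ _)
    · intro x hx
      have hx0 : 0 < x := lt_of_lt_of_le hs2 hx.1
      have hx1 : x < 1 := lt_of_le_of_lt hx.2 hqs.2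
      exact ((hasDerivAt_fc hx0 hx1).continuousAt).continuousWithinAt
    · rw [interior_Icc]
      intro x hx
      obtain ⟨hhalf, hx0⟩ := gt_inv_sqrt2 hx.1
      have hx1 : x < 1 := lt_trans hx.2 hqs.2
      have hx2 : x^2 < 1 := by nlinarith
      rw [(hasDerivAt_fc hx0 hx1).deriv]
      have hg := hgpos x hx.1 hx.2
      have key : (20*x^2 - 13) * Kc x + 20*(1 - 2*x^2) * Ec x < 0 := by
        nlinarith [mul_pos (show (0:ℝ) < 2*x^2 - 1 by linarith) hg, Kc_pos hx2]
      exact mul_neg_of_pos_of_neg hx0 key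
  -- sign of f
  have hfpos : ∀ x, 1 / Real.sqrt 2 < x → x < qhat → 0 < fc x := by
    intro x hx1 hx2
    have := hfanti ⟨hx1.le, (le_trans hx2.le hqh.2.le)⟩ ⟨hqhat0.le, hqh.2.le⟩ hx2
    rwa [hqh0] at this
  have hfneg : ∀ x, qhat < x → x < 1 → fc x < 0 := by
    intro x hx1 hx2
    rcases le_or_gt x qstar with hle | hgt
    · have := hfanti ⟨hqhat0.le, hqh.2.le⟩ ⟨le_trans hqhat0.le hx1.le, hle⟩ hx1
      rwa [hqh0] at this
    · obtain ⟨hhalf, hx0⟩ := gt_inv_sqrt2 (lt_trans hqhat0 hx1)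
      have hx2' : x^2 < 1 := by nlinarith
      have hKE : 0 < Kc x - 2 * Ec x := by linarith [hgneg x hgt hx2]
      have hE := Ec_pos hx2'
      have h1q : (0:ℝ) < 1 - x^2 := by nlinarith
      have h4q : (0:ℝ) < 4*x^2 - 1 := by nlinarith
      simp only [fc]
      nlinarith [mul_pos (mul_pos h1q h4q) hKE, mul_pos hE (show (0:ℝ) < 2*x^2 - 1 by nlinarith)]
  -- derivative facts
  have hderiv : ∀ q ∈ Ioo (1 / Real.sqrt 2) (1:ℝ),
      HasDerivAt hc (-fc q / ((2*q^2 - 1) ^ ((3:ℝ)/2) * q * (1 - q^2))) q := by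
    intro q hq
    obtain ⟨hhalf, hq0⟩ := gt_inv_sqrt2 hq.1
    exact hasDerivAt_hc hhalf hq0 hq.2
  have hdenpos : ∀ q, 1 / Real.sqrt 2 < q → q < 1 →
      0 < (2*q^2 - 1) ^ ((3:ℝ)/2) * q * (1 - q^2) := by
    intro q hq1 hq2
    obtain ⟨hhalf, hq0⟩ := gt_inv_sqrt2 hq1
    have h1 : (0:ℝ) < 2*q^2 - 1 := by linarith
    have h2 : (0:ℝ) < 1 - q^2 := by nlinarith
    have := Real.rpow_pos_of_pos h1 ((3:ℝ)/2)
    positivity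
  refine ⟨hderiv, ?_, ?_⟩
  · apply strictAntiOn_of_deriv_neg (convex_Ioc _ _)
    · intro x hx
      have hx1 : x < 1 := lt_of_le_of_lt hx.2 hqhat1
      exact ((hderiv x ⟨hx.1, hx1⟩).continuousAt).continuousWithinAt
    · rw [interior_Ioc]
      intro x hx
      have hx1 : x < 1 := lt_trans hx.2 hqhat1
      rw [(hderiv x ⟨hx.1, hx1⟩).deriv]
      apply div_neg_of_neg_of_pos
      · simpa using hfpos x hx.1 hx.2
      · exact hdenpos x hx.1 hx1
  · apply strictMonoOn_of_deriv_pos (convex_Ico _ _)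
    · intro x hx
      have hx0 : 1 / Real.sqrt 2 < x := lt_of_lt_of_le hqhat0 hx.1
      exact ((hderiv x ⟨hx0, hx.2⟩).continuousAt).continuousWithinAt
    · rw [interior_Ico]
      intro x hx
      have hx0 : 1 / Real.sqrt 2 < x := lt_trans hqhat0 hx.1
      rw [(hderiv x ⟨hx0, hx.2⟩).deriv]
      apply div_pos
      · simpa using hfneg x hx.1 hx.2
      · exact hdenpos x hx0 hx.2
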